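/- Let D be a real n × n diagonal matrix with strictly positive diagonal entries, and let A be a real symmetric negative semidefinite n × n matrix (i.e. ⟨Ax, x⟩ ≤ 0 for all x ∈ ℝ^n, where ⟨·,·⟩ is the standard inner product). Then every eigenvalue of B = D·A is a nonpositive real number, and the kernel of B equals the kernel of A; in particular, the geometric multiplicity of the eigenvalue 0 of B equals the dimension of the kernel of A. -/

import Mathlib

open Matrix

lemma aux_key {n : ℕ} (M : Matrix (Fin n) (Fin n) ℝ) (hM : M.IsSymm)
    (hns : ∀ x : Fin n → ℝ, M.mulVec x ⬝ᵥ x ≤ 0) (μ : ℂ) (v : Fin n → ℂ) (hv : v ≠ 0)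
    (heig : (M.map (fun r : ℝ => (r : ℂ))).mulVec v = μ • v) : μ.im = 0 ∧ μ.re ≤ 0 := by
  classical
  set a : Fin n → ℝ := fun i => (v i).re with ha
  set b : Fin n → ℝ := fun i => (v i).im with hb
  set Mc := M.map (fun r : ℝ => (r : ℂ)) with hMc
  set z : ℂ := ∑ i, (starRingEnd ℂ) (v i) * (Mc.mulVec v i) with hzdef
  set c : ℝ := ∑ i, Complex.normSq (v i) with hc
  have hcpos : 0 < c := by
    obtain ⟨i, hi⟩ := Function.ne_iff.mp hv
    refine Finset.sum_pos' (fun j _ => Complex.normSq_nonneg _) ⟨i, Finset.mem_univ i, ?_⟩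
    exact Complex.normSq_pos.mpr hi
  have hz1 : z = μ * (c : ℂ) := by
    rw [hzdef, heig]
    push_cast [hc]
    rw [Finset.mul_sum]
    refine Finset.sum_congr rfl fun i _ => ?_
    simp only [Pi.smul_apply, smul_eq_mul]
    rw [show (starRingEnd ℂ) (v i) * (μ * v i) = μ * (v i * (starRingEnd ℂ) (v i)) by ring,
      Complex.mul_conj]
  have hwre : ∀ i, (Mc.mulVec v i).re = M.mulVec a i := by
    intro i
    simp [hMc, Matrix.mulVec, dotProduct, Complex.re_sum, Complex.mul_re, ha]
  have hwim : ∀ i, (Mc.mulVec v i).im = M.mulVec b i := by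
    intro i
    simp [hMc, Matrix.mulVec, dotProduct, Complex.im_sum, Complex.mul_im, hb]
  have hsymm : M.mulVec a ⬝ᵥ b = M.mulVec b ⬝ᵥ a := by
    rw [dotProduct_comm, Matrix.dotProduct_mulVec, ← Matrix.mulVec_transpose, hM.eq,
      dotProduct_comm]
  have hzim : z.im = 0 := by
    rw [hzdef, Complex.im_sum]
    have : ∀ i, ((starRingEnd ℂ) (v i) * Mc.mulVec v i).im
        = a i * M.mulVec b i - b i * M.mulVec a i := by
      intro i
      rw [Complex.mul_im, hwre, hwim]
      simp [ha, hb]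
      ring
    rw [Finset.sum_congr rfl fun i _ => this i, Finset.sum_sub_distrib]
    have h1 : ∑ i, a i * M.mulVec b i = M.mulVec b ⬝ᵥ a := by
      simp [dotProduct, mul_comm]
    have h2 : ∑ i, b i * M.mulVec a i = M.mulVec a ⬝ᵥ b := by
      simp [dotProduct, mul_comm]
    rw [h1, h2, hsymm, sub_self]
  have hzre : z.re ≤ 0 := by
    rw [hzdef, Complex.re_sum]
    have : ∀ i, ((starRingEnd ℂ) (v i) * Mc.mulVec v i).re
        = a i * M.mulVec a i + b i * M.mulVec b i := by
      intro i
      rw [Complex.mul_re, hwre, hwim]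
      simp [ha, hb]
    rw [Finset.sum_congr rfl fun i _ => this i, Finset.sum_add_distrib]
    have h1 : ∑ i, a i * M.mulVec a i = M.mulVec a ⬝ᵥ a := by
      simp [dotProduct, mul_comm]
    have h2 : ∑ i, b i * M.mulVec b i = M.mulVec b ⬝ᵥ b := by
      simp [dotProduct, mul_comm]
    rw [h1, h2]
    exact add_nonpos (hns a) (hns b)
  have him : μ.im * c = 0 := by
    have := congrArg Complex.im hz1
    simpa [Complex.mul_im] using this.symm.trans hzim
  have hre : μ.re * c ≤ 0 := by
    have := congrArg Complex.re hz1
    rw [this] at hzre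
    simpa [Complex.mul_re] using hzre
  constructor
  · exact (mul_eq_zero.mp him).resolve_right hcpos.ne'
  · by_contra h
    push_neg at h
    exact absurd (mul_pos h hcpos) (not_lt.mpr hre)

open Matrix

/-- If `D = diagonal d` with `d_i > 0` and `A` is real symmetric negative
semidefinite, then every complex eigenvalue of `B = D * A` is a nonpositive real number, and
`ker B = ker A`; in particular the geometric multiplicity of the eigenvalue `0` of `B` equals
`dim ker A`. -/
theorem diagonal_mul_negSemidef_spectrum_and_kernel
    {n : ℕ} (hn : 1 ≤ n)
    (d : Fin n → ℝ) (hd : ∀ i, 0 < d i)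
    (A : Matrix (Fin n) (Fin n) ℝ) (hA : A.IsSymm)
    (hnsd : ∀ x : Fin n → ℝ, A.mulVec x ⬝ᵥ x ≤ 0)
    (B : Matrix (Fin n) (Fin n) ℝ) (hB : B = Matrix.diagonal d * A) :
    (∀ μ : ℂ, ((B.map (fun r : ℝ => (r : ℂ))).charpoly.IsRoot μ) → μ.im = 0 ∧ μ.re ≤ 0) ∧
    (∀ x : Fin n → ℝ, B.mulVec x = 0 ↔ A.mulVec x = 0) ∧
    Module.finrank ℝ (LinearMap.ker B.mulVecLin) =
      Module.finrank ℝ (LinearMap.ker A.mulVecLin) := by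
  classical
  have hsq : ∀ i, Real.sqrt (d i) ≠ 0 := fun i => (Real.sqrt_pos.mpr (hd i)).ne'
  set Cm : Matrix (Fin n) (Fin n) ℝ := Matrix.diagonal (fun i => Real.sqrt (d i)) with hCm
  set E : Matrix (Fin n) (Fin n) ℝ := Matrix.diagonal (fun i => (Real.sqrt (d i))⁻¹) with hE
  set S : Matrix (Fin n) (Fin n) ℝ := Cm * A * Cm with hS
  have hCE : Cm * E = 1 := by
    rw [hCm, hE, Matrix.diagonal_mul_diagonal]
    rw [show (fun i => Real.sqrt (d i) * (Real.sqrt (d i))⁻¹) = fun _ => (1:ℝ) from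
      funext fun i => mul_inv_cancel₀ (hsq i)]
    exact Matrix.diagonal_one
  have hSE : S * E = E * B := by
    have h1 : E * Matrix.diagonal d = Cm := by
      rw [hE, hCm, Matrix.diagonal_mul_diagonal]
      have : (fun i => (Real.sqrt (d i))⁻¹ * d i) = fun i => Real.sqrt (d i) := by
        funext i
        rw [inv_mul_eq_div, div_eq_iff (hsq i)]
        exact (Real.mul_self_sqrt (hd i).le).symm
      rw [this]
    rw [hS, hB, mul_assoc, hCE, mul_one, ← mul_assoc, h1]
  have hSsymm : S.IsSymm := by
    rw [Matrix.IsSymm, hS, Matrix.transpose_mul, Matrix.transpose_mul, hA.eq, hCm,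
      Matrix.diagonal_transpose, ← mul_assoc]
  have hCmVec : ∀ z x : Fin n → ℝ, Cm.mulVec z ⬝ᵥ x = z ⬝ᵥ Cm.mulVec x := by
    intro z x
    rw [Matrix.dotProduct_mulVec, ← Matrix.mulVec_transpose, hCm, Matrix.diagonal_transpose]
  have hSns : ∀ x : Fin n → ℝ, S.mulVec x ⬝ᵥ x ≤ 0 := by
    intro x
    rw [hS, ← Matrix.mulVec_mulVec, ← Matrix.mulVec_mulVec, hCmVec]
    exact hnsd (Cm.mulVec x)
  -- part 2
  have hker : ∀ x : Fin n → ℝ, B.mulVec x = 0 ↔ A.mulVec x = 0 := by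
    intro x
    rw [hB, ← Matrix.mulVec_mulVec]
    constructor
    · intro h
      funext i
      have := congrFun h i
      rw [Matrix.mulVec_diagonal] at this
      simpa using (mul_eq_zero.mp this).resolve_left (hd i).ne'
    · intro h
      rw [h]
      funext i
      simp [Matrix.mulVec_diagonal]
  refine ⟨?_, hker, ?_⟩
  · -- part 1
    intro μ hroot
    set f : ℝ →+* ℂ := Complex.ofRealHom with hf
    have hmapf : ∀ M : Matrix (Fin n) (Fin n) ℝ,
        M.map (fun r : ℝ => (r : ℂ)) = M.map f := fun _ => rfl
    set Bc := B.map f with hBc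
    have hdet : (Polynomial.eval (Matrix.scalar (Fin n) μ) (matPolyEquiv (charmatrix Bc))).det
        = 0 := by
      have := hroot
      rw [Polynomial.IsRoot, hmapf, ← hBc, Matrix.charpoly, eval_det] at this
      exact this
    rw [matPolyEquiv_charmatrix, Polynomial.eval_sub, Polynomial.eval_X,
      Polynomial.eval_C] at hdet
    obtain ⟨v, hv, hv0⟩ := (Matrix.exists_mulVec_eq_zero_iff.mpr hdet)
    have heigB : Bc.mulVec v = μ • v := by
      have := hv0
      rw [Matrix.sub_mulVec] at this
      have h2 : (Matrix.scalar (Fin n) μ).mulVec v = μ • v := by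
        funext i
        simp [Matrix.scalar, Matrix.mulVec_diagonal]
      rw [h2] at this
      exact (sub_eq_zero.mp this).symm
    set Ec := E.map f with hEc
    set Cc := Cm.map f with hCc
    set Sc := S.map f with hSc
    have hCEc : Cc * Ec = 1 := by
      rw [hCc, hEc, ← Matrix.map_mul, hCE, Matrix.map_one f f.map_zero f.map_one]
    have hSEc : Sc * Ec = Ec * Bc := by
      rw [hSc, hEc, hBc, ← Matrix.map_mul, ← Matrix.map_mul, hSE]
    set w := Ec.mulVec v with hw
    have hw0 : w ≠ 0 := by
      intro h
      apply hv
      have hveq : v = Cc.mulVec w := by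
        rw [hw, Matrix.mulVec_mulVec, hCEc, Matrix.one_mulVec]
      rw [hveq, h, Matrix.mulVec_zero]
    have heigS : Sc.mulVec w = μ • w := by
      rw [hw, Matrix.mulVec_mulVec, hSEc, ← Matrix.mulVec_mulVec, heigB, Matrix.mulVec_smul]
    exact aux_key S hSsymm hSns μ w hw0 heigS
  · -- part 3
    have : LinearMap.ker B.mulVecLin = LinearMap.ker A.mulVecLin := by
      ext x
      simp only [LinearMap.mem_ker, Matrix.mulVecLin_apply]
      exact hker x
    rw [this]
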